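/- Let G be a simple graph on a finite vertex set V and let F : V → V → ℝ be antisymmetric (F v w = −F w v for all v, w), representing a combinatorial vector field on the edges of G. If for every cycle c in G (a nontrivial closed walk that repeats no edges and no vertices except its endpoint) the sum of F over the consecutive oriented edges of c is 0, then for every closed walk p in G the sum of F over the consecutive oriented edges of p is 0. -/

import Mathlib

open SimpleGraph

lemma aux_path_edge {V : Type*} {G : SimpleGraph V} {v w : V}
    (q : G.Walk w v) (hq : q.IsPath) (hvw : v ≠ w) (he : s(v, w) ∈ q.edges) :
    q.length = 1 := by
  cases q with
  | nil => simp at he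
  | cons h2 r =>
    rename_i x
    rw [Walk.edges_cons, List.mem_cons] at he
    have h3 := (Walk.cons_isPath_iff h2 r).mp hq
    rcases he with he | he
    · rw [Sym2.eq_iff] at he
      rcases he with ⟨h1, _⟩ | ⟨h1, _⟩
      · exact absurd h1 hvw
      · subst h1
        have : r = Walk.nil := Walk.isPath_iff_eq_nil.mp h3.1
        subst this
        simp
    · have := Walk.snd_mem_support_of_mem_edges r he
      exact absurd this h3.2

theorem closed_walk_integral_zero_of_cycle_integral_zero
    {V : Type*} [Fintype V] (G : SimpleGraph V)
    (F : V → V → ℝ) (hF : ∀ v w, F v w = -F w v)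
    (hcycle : ∀ (v : V) (c : G.Walk v v), c.IsCycle →
      (c.darts.map (fun d => F d.toProd.1 d.toProd.2)).sum = 0) :
    ∀ (v : V) (p : G.Walk v v),
      (p.darts.map (fun d => F d.toProd.1 d.toProd.2)).sum = 0 := by
  classical
  suffices H : ∀ n (v : V) (p : G.Walk v v), p.length = n →
      (p.darts.map (fun d => F d.toProd.1 d.toProd.2)).sum = 0 by
    exact fun v p => H p.length v p rfl
  intro n
  induction n using Nat.strong_induction_on with
  | _ n IH =>
  intro v p hn
  cases p with
  | nil => simp
  | cons h q =>
    rename_i w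
    simp only [Walk.length_cons] at hn
    by_cases hnod : q.support.Nodup
    · by_cases he : s(v, w) ∈ q.edges
      · have hq1 : q.length = 1 := aux_path_edge q ((Walk.isPath_def q).mpr hnod) h.ne he
        cases q with
        | nil => simp at hq1
        | cons h2 r =>
          cases r with
          | nil => simp [hF v w]
          | cons h3 r' => simp [Walk.length_cons] at hq1
      · exact hcycle v _ ((Walk.cons_isCycle_iff q h).mpr ⟨(Walk.isPath_def q).mpr hnod, he⟩)
    · obtain ⟨u, hu⟩ := List.exists_duplicate_iff_not_nodup.mpr hnod
      have hcount : 2 ≤ q.support.count u := List.duplicate_iff_two_le_count.mp hu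
      have humem : u ∈ q.support := hu.mem
      have hspec : q = (q.takeUntil u humem).append (q.dropUntil u humem) :=
        (q.take_spec humem).symm
      have hcount_a : (q.takeUntil u humem).support.count u = 1 :=
        q.count_support_takeUntil_eq_one humem
      have hu2 : u ∈ (q.dropUntil u humem).support.tail := by
        rw [hspec, Walk.support_append, List.count_append, hcount_a] at hcount
        exact List.count_pos_iff.mp (by omega)
      have hnn : ¬ (q.dropUntil u humem).Nil := by
        intro hnil
        rw [Walk.nil_iff_length_eq] at hnil
        have h5 := (q.dropUntil u humem).length_support
        have h6 : (q.dropUntil u humem).support.tail.length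
            = (q.dropUntil u humem).support.length - 1 := List.length_tail
        have : (q.dropUntil u humem).support.tail ≠ [] := List.ne_nil_of_mem hu2
        have := List.length_pos_iff.mpr this
        omega
      obtain ⟨x, h2, rest', hrest⟩ := Walk.not_nil_iff.mp hnn
      rw [hrest] at hu2
      rw [Walk.support_cons, List.tail_cons] at hu2
      set a := q.takeUntil u humem with ha
      set tk := rest'.takeUntil u hu2 with htk
      set dr := rest'.dropUntil u hu2 with hdr
      have hspec2 : rest' = tk.append dr := (rest'.take_spec hu2).symm
      -- lengths
      have hlq : q.length = a.length + (1 + rest'.length) := by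
        conv_lhs => rw [hspec, hrest]
        simp [Walk.length_append, Nat.add_comm]
      have hlr : rest'.length = tk.length + dr.length := by
        conv_lhs => rw [hspec2]
        simp [Walk.length_append, Nat.add_comm]
      -- sum decomposition
      have hsum : (q.darts.map (fun d => F d.toProd.1 d.toProd.2)).sum
          = (a.darts.map (fun d => F d.toProd.1 d.toProd.2)).sum
            + (F u x + (tk.darts.map (fun d => F d.toProd.1 d.toProd.2)).sum
              + (dr.darts.map (fun d => F d.toProd.1 d.toProd.2)).sum) := by
        conv_lhs => rw [hspec, hrest]
        conv_lhs => rw [show (Walk.cons h2 rest') = Walk.cons h2 (tk.append dr) by rw [← hspec2]]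
        simp [Walk.darts_append, add_assoc]
      have hm : ((Walk.cons h2 tk).darts.map (fun d => F d.toProd.1 d.toProd.2)).sum = 0 :=
        IH (tk.length + 1) (by omega) u _ (by simp)
      have hp' : ((Walk.cons h (a.append dr)).darts.map
          (fun d => F d.toProd.1 d.toProd.2)).sum = 0 :=
        IH (a.length + dr.length + 1) (by omega) v _ (by simp [Walk.length_append])
      simp only [Walk.darts_cons, List.map_cons, List.sum_cons, Walk.darts_append,
        List.map_append, List.sum_append] at hm hp' ⊢
      rw [hsum]
      linarith
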